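/- Let K be a field and m, n positive integers. The ring R = K[A,B,C,D,T]/I, with I generated by the 2×2 minors of the matrix with rows (A²+T^m, B, D), (C, A², B^n - D), is an integral domain. -/

import Mathlib

set_option maxHeartbeats 1000000
set_option synthInstance.maxHeartbeats 400000

open MvPolynomial

namespace Stmt16

variable (K : Type) [Field K] (m n : ℕ)

noncomputable abbrev R5 := MvPolynomial (Fin 5) K
noncomputable abbrev R3 := MvPolynomial (Fin 3) K
noncomputable abbrev F := FractionRing (R3 K)

noncomputable def ι : R3 K →+* F K := algebraMap _ _

noncomputable def f1 : R5 K := (X 0 ^ 2) * (X 0 ^ 2 + X 4 ^ m) - X 1 * X 2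
noncomputable def f2 : R5 K := (X 0 ^ 2 + X 4 ^ m) * (X 1 ^ n - X 3) - X 2 * X 3
noncomputable def f3 : R5 K := X 1 * (X 1 ^ n - X 3) - (X 0 ^ 2) * X 3

noncomputable def Igen : Ideal (R5 K) := Ideal.span {f1 K m, f2 K m n, f3 K n}

noncomputable def v : Fin 5 → F K :=
  ![ι K (X 0), ι K (X 1), ι K (X 0 ^ 2 * (X 0 ^ 2 + X 2 ^ m)) / ι K (X 1),
    ι K (X 1 ^ (n + 1)) / ι K (X 0 ^ 2 + X 1), ι K (X 2)]

noncomputable def φ : R5 K →+* F K := eval₂Hom (algebraMap K (F K)) (v K m n)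

def P (μ : Fin 5 →₀ ℕ) : Prop :=
  (0 < μ 2 → μ 1 = 0 ∧ μ 3 = 0) ∧ (0 < μ 3 → μ 0 ≤ 1)

def w (μ : Fin 5 →₀ ℕ) : ℕ := 2 * μ 0 + μ 1 + (m + 10) * μ 2 + (n + 10) * μ 3 + μ 4

noncomputable def NN : Submodule K (R5 K) where
  carrier := {G | ∀ μ ∈ G.support, P μ}
  add_mem' := by
    intro a b ha hb μ hμ
    rcases Finset.mem_union.1 (MvPolynomial.support_add hμ) with h | h
    · exact ha μ h
    · exact hb μ h
  zero_mem' := by intro μ hμ; simp at hμ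
  smul_mem' := by
    intro c a ha μ hμ
    exact ha μ (Finsupp.support_smul hμ)

noncomputable def θ (KK LL : ℕ) (μ : Fin 5 →₀ ℕ) : R3 K :=
  X 0 ^ μ 0 * (X 0 ^ 2 * (X 0 ^ 2 + X 2 ^ m)) ^ μ 2 * X 1 ^ μ 1 * (X 1 ^ (n + 1)) ^ μ 3 *
    X 2 ^ μ 4 * X 1 ^ (KK - μ 2) * (X 0 ^ 2 + X 1) ^ (LL - μ 3)

noncomputable def Θ (G : R5 K) (KK LL : ℕ) : R3 K :=
  ∑ μ ∈ G.support, MvPolynomial.C (coeff μ G) * θ K m n KK LL μ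

noncomputable def ev0 : R3 K →+* R3 K := eval₂Hom MvPolynomial.C ![X 0, 0, X 2]
noncomputable def evm : R3 K →+* R3 K := eval₂Hom MvPolynomial.C ![X 0, -(X 0 ^ 2), X 2]

lemma hb_ne : ι K (X 1) ≠ 0 := by
  rw [ι, ne_eq, IsFractionRing.to_map_eq_zero_iff]; exact X_ne_zero 1

lemma hab_ne : ι K (X 0 ^ 2 + X 1) ≠ 0 := by
  rw [ι, ne_eq, IsFractionRing.to_map_eq_zero_iff]
  intro h
  have := congrArg (eval (![0,1,0] : Fin 3 → K)) h
  simp at this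

lemma hatm_ne (hm : 0 < m) : (X 0 ^ 2 + X 2 ^ m : R3 K) ≠ 0 := by
  intro h
  have := congrArg (eval (![1,0,0] : Fin 3 → K)) h
  simp [zero_pow (by omega : m ≠ 0)] at this

lemma gen_le_ker : Igen K m n ≤ RingHom.ker (φ K m n) := by
  rw [Igen, Ideal.span_le]
  rintro g (rfl | rfl | rfl) <;>
    simp only [SetLike.mem_coe, RingHom.mem_ker, φ, f1, f2, f3, map_sub, map_mul, map_add,
      map_pow, eval₂Hom_X', v, Matrix.cons_val_zero, Matrix.cons_val_one, Matrix.head_cons,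
      Matrix.cons_val_two, Matrix.tail_cons, Matrix.cons_val_three, Matrix.cons_val_four]
  · rw [sub_eq_zero, eq_comm]
    rw [mul_comm ((ι K) (X 1)), div_mul_cancel₀ _ (hb_ne K)]
  all_goals {
    have hb' : (ι K) (X 1) ≠ 0 := hb_ne K
    have hab' : (ι K) (X 0) ^ 2 + (ι K) (X 1) ≠ 0 := by
      have := hab_ne K; rwa [map_add, map_pow] at this
    rw [sub_eq_zero]
    field_simp
    simp only [← map_pow, ← map_mul, ← map_add, ← map_sub]
    exact congrArg _ (by ring)
  }

lemma clearing_monomial (KK LL : ℕ) (μ : Fin 5 →₀ ℕ) (c : K) (h2 : μ 2 ≤ KK) (h3 : μ 3 ≤ LL) :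
    φ K m n (monomial μ c) * (ι K (X 1) ^ KK * ι K (X 0 ^ 2 + X 1) ^ LL) =
      ι K (MvPolynomial.C c * θ K m n KK LL μ) := by
  have hc : algebraMap K (F K) c = ι K (MvPolynomial.C c) := by
    rw [ι, IsScalarTower.algebraMap_apply K (R3 K) (F K), MvPolynomial.algebraMap_eq]
  rw [φ, coe_eval₂Hom, eval₂_monomial, Finsupp.prod_fintype _ _ (fun i => pow_zero _),
    Fin.prod_univ_five]
  simp only [v, Matrix.cons_val_zero, Matrix.cons_val_one, Matrix.head_cons,
    Matrix.cons_val_two, Matrix.tail_cons, Matrix.cons_val_three, Matrix.cons_val_four]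
  rw [hc, θ]
  simp only [map_mul, map_pow]
  have hK : KK = μ 2 + (KK - μ 2) := (Nat.add_sub_cancel' h2).symm
  have hL : LL = μ 3 + (LL - μ 3) := (Nat.add_sub_cancel' h3).symm
  rw [show (ι K (X 1) : F K) ^ KK = ι K (X 1) ^ μ 2 * ι K (X 1) ^ (KK - μ 2) by
      rw [← pow_add, ← hK],
    show (ι K (X 0 ^ 2 + X 1) : F K) ^ LL
        = ι K (X 0 ^ 2 + X 1) ^ μ 3 * ι K (X 0 ^ 2 + X 1) ^ (LL - μ 3) by
      rw [← pow_add, ← hL]]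
  have cancel : ∀ (x y : F K) (k : ℕ), y ≠ 0 → (x / y) ^ k * y ^ k = x ^ k := by
    intro x y k hy
    rw [div_pow, div_mul_cancel₀ _ (pow_ne_zero _ hy)]
  trans ((ι K) (MvPolynomial.C c) * (ι K) (X 0) ^ μ 0 * (ι K) (X 1) ^ μ 1 * (ι K) (X 2) ^ μ 4 *
      (ι K) (X 1) ^ (KK - μ 2) * (ι K) (X 0 ^ 2 + X 1) ^ (LL - μ 3) *
      (((ι K) (X 0) ^ 2 * (ι K) (X 0 ^ 2 + X 2 ^ m) / (ι K) (X 1)) ^ μ 2 * (ι K) (X 1) ^ μ 2) *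
      (((ι K) (X 1) ^ (n + 1) / (ι K) (X 0 ^ 2 + X 1)) ^ μ 3 * (ι K) (X 0 ^ 2 + X 1) ^ μ 3))
  · ring
  · rw [cancel _ _ _ (hb_ne K), cancel _ _ _ (hab_ne K)]
    ring

lemma clearing (G : R5 K) (KK LL : ℕ)
    (hbd : ∀ μ ∈ G.support, μ 2 ≤ KK ∧ μ 3 ≤ LL) :
    φ K m n G * (ι K (X 1) ^ KK * ι K (X 0 ^ 2 + X 1) ^ LL) = ι K (Θ K m n G KK LL) := by
  conv_lhs => rw [G.as_sum]
  rw [map_sum, Finset.sum_mul, Θ, map_sum]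
  apply Finset.sum_congr rfl
  intro μ hμ
  exact clearing_monomial K m n KK LL μ _ (hbd μ hμ).1 (hbd μ hμ).2

lemma mono2 (a b : ℕ) (c : K) :
    (monomial (Finsupp.single 0 a + Finsupp.single 2 b) c : R3 K)
      = MvPolynomial.C c * (X 0 ^ a * X 2 ^ b) := by
  rw [X_pow_eq_monomial, X_pow_eq_monomial, monomial_mul, C_mul_monomial, one_mul, mul_one]

lemma mono3 (a b d : ℕ) (c : K) :
    (monomial (Finsupp.single 0 a + (Finsupp.single 1 b + Finsupp.single 2 d)) c : R3 K)
      = MvPolynomial.C c * (X 0 ^ a * (X 1 ^ b * X 2 ^ d)) := by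
  rw [X_pow_eq_monomial, X_pow_eq_monomial, X_pow_eq_monomial, monomial_mul, monomial_mul,
    C_mul_monomial, one_mul, one_mul, mul_one]

lemma normal_zero (hm : 0 < m) (G : R5 K) (hG : ∀ μ ∈ G.support, P μ)
    (h0 : φ K m n G = 0) : G = 0 := by
  by_contra hne
  have hS : G.support.Nonempty := support_nonempty.2 hne
  set KK := G.support.sup (fun μ => μ 2) with hKKdef
  set LL := G.support.sup (fun μ => μ 3) with hLLdef
  have hbd : ∀ μ ∈ G.support, μ 2 ≤ KK ∧ μ 3 ≤ LL :=
    fun μ h => ⟨Finset.le_sup (f := fun μ => μ 2) h, Finset.le_sup (f := fun μ => μ 3) h⟩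
  have hΘ : Θ K m n G KK LL = 0 := by
    have h := clearing K m n G KK LL hbd
    rw [h0, zero_mul] at h
    have : ι K (Θ K m n G KK LL) = 0 := h.symm
    rwa [ι, IsFractionRing.to_map_eq_zero_iff] at this
  rcases Nat.eq_zero_or_pos KK with hKK0 | hKKpos
  · rcases Nat.eq_zero_or_pos LL with hLL0 | hLLpos
    · -- stage 3 : KK = LL = 0
      obtain ⟨μs, hμsS⟩ := hS
      have hterm : ∀ μ ∈ G.support, MvPolynomial.C (coeff μ G) * θ K m n KK LL μ =
          monomial (Finsupp.single (0:Fin 3) (μ 0) +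
            (Finsupp.single (1:Fin 3) (μ 1) + Finsupp.single (2:Fin 3) (μ 4))) (coeff μ G) := by
        intro μ hμ
        obtain ⟨hb2, hb3⟩ := hbd μ hμ
        have h2 : μ 2 = 0 := by omega
        have h3 : μ 3 = 0 := by omega
        rw [θ, mono3, h2, h3, hKK0, hLL0]
        simp only [pow_zero, Nat.sub_zero, Nat.sub_self, one_mul, mul_one]
        ring
      rw [Θ, Finset.sum_congr rfl hterm] at hΘ
      have hc := congrArg (coeff (Finsupp.single (0:Fin 3) (μs 0) +
        (Finsupp.single (1:Fin 3) (μs 1) + Finsupp.single (2:Fin 3) (μs 4)))) hΘ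
      rw [MvPolynomial.coeff_sum, coeff_zero] at hc
      rw [Finset.sum_eq_single_of_mem μs hμsS ?side3] at hc
      case side3 =>
        intro μ hμ hne'
        rw [coeff_monomial, if_neg]
        intro heq
        have e0 := DFunLike.congr_fun heq (0 : Fin 3)
        have e1 := DFunLike.congr_fun heq (1 : Fin 3)
        have e2 := DFunLike.congr_fun heq (2 : Fin 3)
        simp [Finsupp.single_apply] at e0 e1 e2
        obtain ⟨hb2, hb3⟩ := hbd μ hμ
        obtain ⟨hb2', hb3'⟩ := hbd μs hμsS
        apply hne'
        ext i
        fin_cases i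
        · exact e0
        · exact e1
        · show μ 2 = μs 2; omega
        · show μ 3 = μs 3; omega
        · exact e2
      rw [coeff_monomial, if_pos rfl] at hc
      exact mem_support_iff.1 hμsS hc
    · -- stage 2 : KK = 0, LL ≥ 1
      obtain ⟨μs, hμsS, hsup⟩ := Finset.exists_mem_eq_sup G.support hS (fun μ => μ 3)
      have hs0 : μs 0 ≤ 1 := (hG μs hμsS).2 (by omega)
      have hterm : ∀ μ ∈ G.support,
          evm K (MvPolynomial.C (coeff μ G) * θ K m n KK LL μ) =
            ((-1 : R3 K) ^ ((n+1)*LL) * X 0 ^ (2*((n+1)*LL))) *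
              (if μ 3 = LL then
                monomial (Finsupp.single (0:Fin 3) (μ 0 + 2*μ 1) + Finsupp.single (2:Fin 3) (μ 4))
                  ((-1 : K) ^ (μ 1) * coeff μ G)
              else 0) := by
        intro μ hμ
        obtain ⟨hb2, hb3⟩ := hbd μ hμ
        have h2 : μ 2 = 0 := by omega
        rw [θ]
        simp only [map_mul, map_pow, evm, eval₂Hom_X', Matrix.cons_val_zero, Matrix.cons_val_one,
          Matrix.head_cons, Matrix.cons_val_two, Matrix.tail_cons, eval₂Hom_C, map_add]
        rw [h2, hKK0]
        rw [show ((X 0:R3 K) ^ 2 + -(X 0 ^ 2)) = 0 from by ring]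
        split_ifs with hcond
        · rw [hcond, Nat.sub_self, pow_zero, mono2]
          simp only [pow_zero, Nat.sub_zero, Nat.sub_self, one_mul, mul_one, map_mul, map_pow,
            map_neg, map_one]
          ring
        · simp [zero_pow (by omega : LL - μ 3 ≠ 0)]
      have hfac : ((-1 : R3 K) ^ ((n+1)*LL) * X 0 ^ (2*((n+1)*LL))) ≠ 0 :=
        mul_ne_zero (pow_ne_zero _ (neg_ne_zero.2 one_ne_zero)) (pow_ne_zero _ (X_ne_zero _))
      have hsum0 : (∑ μ ∈ G.support, if μ 3 = LL then
          monomial (Finsupp.single (0:Fin 3) (μ 0 + 2*μ 1) + Finsupp.single (2:Fin 3) (μ 4))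
            ((-1 : K) ^ (μ 1) * coeff μ G) else 0) = 0 := by
        have h := congrArg (evm K) hΘ
        rw [Θ, map_sum, map_zero, Finset.sum_congr rfl hterm, ← Finset.mul_sum] at h
        exact (mul_eq_zero.1 h).resolve_left hfac
      have hc := congrArg (coeff (Finsupp.single (0:Fin 3) (μs 0 + 2*μs 1) +
        Finsupp.single (2:Fin 3) (μs 4))) hsum0
      rw [MvPolynomial.coeff_sum, coeff_zero] at hc
      rw [Finset.sum_eq_single_of_mem μs hμsS ?side2] at hc
      case side2 =>
        intro μ hμ hne'
        split_ifs with hcond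
        · rw [coeff_monomial, if_neg]
          intro heq
          have e0 := DFunLike.congr_fun heq (0 : Fin 3)
          have e2 := DFunLike.congr_fun heq (2 : Fin 3)
          simp [Finsupp.single_apply] at e0 e2
          have h0' : μ 0 ≤ 1 := (hG μ hμ).2 (by omega)
          obtain ⟨hb2, hb3⟩ := hbd μ hμ
          obtain ⟨hb2', hb3'⟩ := hbd μs hμsS
          apply hne'
          ext i
          fin_cases i
          · show μ 0 = μs 0; omega
          · show μ 1 = μs 1; omega
          · show μ 2 = μs 2; omega
          · show μ 3 = μs 3; rw [hcond, hLLdef]; exact hsup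
          · exact e2
        · rfl
      rw [if_pos (show μs 3 = LL from hsup.symm), coeff_monomial, if_pos rfl] at hc
      rcases mul_eq_zero.1 hc with h | h
      · exact pow_ne_zero _ (neg_ne_zero.2 one_ne_zero) h
      · exact mem_support_iff.1 hμsS h
  · -- stage 1 : KK ≥ 1
    obtain ⟨μs, hμsS, hsup⟩ := Finset.exists_mem_eq_sup G.support hS (fun μ => μ 2)
    have hPs := hG μs hμsS
    have hs1 : μs 1 = 0 := (hPs.1 (by omega)).1
    have hs3 : μs 3 = 0 := (hPs.1 (by omega)).2
    have hterm : ∀ μ ∈ G.support,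
        ev0 K (MvPolynomial.C (coeff μ G) * θ K m n KK LL μ) =
          (X 0 ^ (2*KK + 2*LL) * (X 0 ^ 2 + X 2 ^ m) ^ KK) *
            (if μ 1 = 0 ∧ μ 3 = 0 ∧ μ 2 = KK then
              monomial (Finsupp.single (0:Fin 3) (μ 0) + Finsupp.single (2:Fin 3) (μ 4)) (coeff μ G)
            else 0) := by
      intro μ hμ
      obtain ⟨hb2, hb3⟩ := hbd μ hμ
      rw [θ]
      simp only [map_mul, map_pow, ev0, eval₂Hom_X', Matrix.cons_val_zero, Matrix.cons_val_one,
        Matrix.head_cons, Matrix.cons_val_two, Matrix.tail_cons, eval₂Hom_C, map_add,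
        add_zero, mul_pow]
      split_ifs with hcond
      · obtain ⟨h1, h3, h2⟩ := hcond
        rw [h1, h3, h2, mono2]
        simp only [pow_zero, Nat.sub_self, Nat.sub_zero, one_mul, mul_one]
        ring
      · rw [mul_zero]
        by_cases h1 : μ 1 = 0
        · by_cases h3 : μ 3 = 0
          · have h2 : μ 2 ≠ KK := by tauto
            rw [show ((0:R3 K)) ^ (KK - μ 2) = 0 from zero_pow (by omega)]
            ring
          · rw [show (((0:R3 K)) ^ (n+1)) ^ μ 3 = 0 from by
              rw [zero_pow (by omega : n + 1 ≠ 0), zero_pow h3]]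
            ring
        · rw [zero_pow h1]; ring
    have hfac : (X 0 ^ (2*KK+2*LL) * (X 0 ^ 2 + X 2 ^ m) ^ KK : R3 K) ≠ 0 :=
      mul_ne_zero (pow_ne_zero _ (X_ne_zero _)) (pow_ne_zero _ (hatm_ne K m hm))
    have hsum0 : (∑ μ ∈ G.support, if μ 1 = 0 ∧ μ 3 = 0 ∧ μ 2 = KK then
        monomial (Finsupp.single (0:Fin 3) (μ 0) + Finsupp.single (2:Fin 3) (μ 4)) (coeff μ G) else 0) = 0 := by
      have h := congrArg (ev0 K) hΘ
      rw [Θ, map_sum, map_zero, Finset.sum_congr rfl hterm, ← Finset.mul_sum] at h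
      exact (mul_eq_zero.1 h).resolve_left hfac
    have hc := congrArg (coeff (Finsupp.single (0:Fin 3) (μs 0) + Finsupp.single (2:Fin 3) (μs 4))) hsum0
    rw [MvPolynomial.coeff_sum, coeff_zero] at hc
    rw [Finset.sum_eq_single_of_mem μs hμsS ?side] at hc
    case side =>
      intro μ hμ hne'
      split_ifs with hcond
      · rw [coeff_monomial, if_neg]
        intro heq
        have e0 := DFunLike.congr_fun heq (0 : Fin 3)
        have e2 := DFunLike.congr_fun heq (2 : Fin 3)
        simp [Finsupp.single_apply] at e0 e2
        apply hne'
        ext i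
        fin_cases i
        · exact e0
        · show μ 1 = μs 1; rw [hcond.1, hs1]
        · show μ 2 = μs 2; rw [hcond.2.2, hKKdef]; exact hsup
        · show μ 3 = μs 3; rw [hcond.2.1, hs3]
        · exact e2
      · rfl
    rw [if_pos ⟨hs1, hs3, hsup.symm⟩, coeff_monomial, if_pos rfl] at hc
    exact (mem_support_iff.1 hμsS) hc

lemma hXm (i : Fin 5) (k : ℕ) (s : Fin 5 →₀ ℕ) :
    (monomial (Finsupp.single i k + s) (1 : K)) = X i ^ k * monomial s 1 := by
  rw [X_pow_eq_monomial, monomial_mul, one_mul]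

lemma w_add (μ ν : Fin 5 →₀ ℕ) : w m n (μ + ν) = w m n μ + w m n ν := by
  simp only [w, Finsupp.add_apply]; ring

lemma mono_mem (W : ℕ) : ∀ (μ : Fin 5 →₀ ℕ), w m n μ ≤ W →
    monomial μ (1 : K) ∈ NN K ⊔ (Igen K m n).restrictScalars K := by
  induction W with
  | zero =>
    intro μ hμ
    apply Submodule.mem_sup_left
    intro ν hν
    classical
    rw [support_monomial, if_neg one_ne_zero, Finset.mem_singleton] at hν
    subst hν
    have h2 : ν 2 ≤ (m + 10) * ν 2 := Nat.le_mul_of_pos_left _ (by omega)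
    have h3 : ν 3 ≤ (n + 10) * ν 3 := Nat.le_mul_of_pos_left _ (by omega)
    unfold w at hμ
    exact ⟨fun h => by omega, fun h => by omega⟩
  | succ W ih =>
    intro μ hμ
    by_cases c1 : 0 < μ 1 ∧ 0 < μ 2
    · -- BC case
      set μ' := μ - (Finsupp.single 1 1 + Finsupp.single 2 1) with hμ'def
      have hsum : Finsupp.single 1 1 + (Finsupp.single 2 1 + μ') = μ := by
        ext i
        fin_cases i <;>
          simp [μ', Finsupp.single_apply, Finsupp.tsub_apply] <;> omega
      have hw : w m n μ = (m + 11) + w m n μ' := by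
        rw [← hsum, w_add, w_add]
        simp [w, Finsupp.single_apply]
        ring
      have hid : monomial μ (1 : K) =
          (-(f1 K m)) * monomial μ' 1 + monomial (Finsupp.single 0 4 + μ') 1 +
            monomial (Finsupp.single 0 2 + (Finsupp.single 4 m + μ')) 1 := by
        rw [← hsum]
        simp only [hXm]
        rw [f1]; ring
      rw [hid]
      refine add_mem (add_mem ?_ ?_) ?_
      · apply Submodule.mem_sup_right
        show (-(f1 K m)) * monomial μ' 1 ∈ Igen K m n
        exact Ideal.mul_mem_right _ _ (neg_mem (Ideal.subset_span (by left; rfl)))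
      · apply ih
        rw [w_add]
        have : w m n (Finsupp.single 0 4) = 8 := by simp [w, Finsupp.single_apply]
        omega
      · apply ih
        rw [w_add, w_add]
        have h1 : w m n (Finsupp.single 0 2) = 4 := by simp [w, Finsupp.single_apply]
        have h2 : w m n (Finsupp.single 4 m) = m := by simp [w, Finsupp.single_apply]
        omega
    · by_cases c2 : 0 < μ 2 ∧ 0 < μ 3
      · -- CD case
        set μ' := μ - (Finsupp.single 2 1 + Finsupp.single 3 1) with hμ'def
        have hsum : Finsupp.single 2 1 + (Finsupp.single 3 1 + μ') = μ := by
          ext i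
          fin_cases i <;>
            simp [μ', Finsupp.single_apply, Finsupp.tsub_apply] <;> omega
        have hw : w m n μ = (m + n + 20) + w m n μ' := by
          rw [← hsum, w_add, w_add]
          simp [w, Finsupp.single_apply]
          ring
        have hid : monomial μ (1 : K) =
            (-(f2 K m n)) * monomial μ' 1 +
              monomial (Finsupp.single 0 2 + (Finsupp.single 1 n + μ')) 1 -
              monomial (Finsupp.single 0 2 + (Finsupp.single 3 1 + μ')) 1 +
              monomial (Finsupp.single 4 m + (Finsupp.single 1 n + μ')) 1 -
              monomial (Finsupp.single 4 m + (Finsupp.single 3 1 + μ')) 1 := by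
          rw [← hsum]
          simp only [hXm]
          rw [f2]; ring
        have hs1 : w m n (Finsupp.single 0 2) = 4 := by simp [w, Finsupp.single_apply]
        have hs2 : w m n (Finsupp.single 1 n) = n := by simp [w, Finsupp.single_apply]
        have hs3 : w m n (Finsupp.single 3 1) = n + 10 := by simp [w, Finsupp.single_apply]
        have hs4 : w m n (Finsupp.single 4 m) = m := by simp [w, Finsupp.single_apply]
        rw [hid]
        refine sub_mem (add_mem (sub_mem (add_mem ?_ ?_) ?_) ?_) ?_
        · apply Submodule.mem_sup_right
          show (-(f2 K m n)) * monomial μ' 1 ∈ Igen K m n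
          exact Ideal.mul_mem_right _ _ (neg_mem (Ideal.subset_span (by right; left; rfl)))
        all_goals apply ih
        all_goals rw [w_add, w_add]
        all_goals omega
      · by_cases c3 : 2 ≤ μ 0 ∧ 0 < μ 3
        · -- A²D case
          set μ' := μ - (Finsupp.single 0 2 + Finsupp.single 3 1) with hμ'def
          have hsum : Finsupp.single 0 2 + (Finsupp.single 3 1 + μ') = μ := by
            ext i
            fin_cases i <;>
              simp [μ', Finsupp.single_apply, Finsupp.tsub_apply] <;> omega
          have hw : w m n μ = (n + 14) + w m n μ' := by
            rw [← hsum, w_add, w_add]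
            simp [w, Finsupp.single_apply]
            ring
          have hid : monomial μ (1 : K) =
              (-(f3 K n)) * monomial μ' 1 + monomial (Finsupp.single 1 (n + 1) + μ') 1 -
                monomial (Finsupp.single 1 1 + (Finsupp.single 3 1 + μ')) 1 := by
            rw [← hsum]
            simp only [hXm]
            rw [f3]; ring
          have hs1 : w m n (Finsupp.single 1 (n + 1)) = n + 1 := by
            simp [w, Finsupp.single_apply]
          have hs2 : w m n (Finsupp.single 1 1) = 1 := by simp [w, Finsupp.single_apply]
          have hs3 : w m n (Finsupp.single 3 1) = n + 10 := by simp [w, Finsupp.single_apply]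
          rw [hid]
          refine sub_mem (add_mem ?_ ?_) ?_
          · apply Submodule.mem_sup_right
            show (-(f3 K n)) * monomial μ' 1 ∈ Igen K m n
            exact Ideal.mul_mem_right _ _ (neg_mem (Ideal.subset_span (by right; right; rfl)))
          · apply ih; rw [w_add]; omega
          · apply ih; rw [w_add, w_add]; omega
        · -- normal case
          apply Submodule.mem_sup_left
          intro ν hν
          classical
          rw [support_monomial, if_neg one_ne_zero, Finset.mem_singleton] at hν
          subst hν
          push_neg at c1 c2 c3
          exact ⟨fun h => ⟨by omega, by omega⟩, fun h => by omega⟩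

lemma spanning (G : R5 K) : G ∈ NN K ⊔ (Igen K m n).restrictScalars K := by
  induction G using MvPolynomial.induction_on' with
  | monomial μ c =>
    have : monomial μ c = c • monomial μ (1 : K) := by
      rw [smul_monomial, smul_eq_mul, mul_one]
    rw [this]
    exact Submodule.smul_mem _ c (mono_mem K m n (w m n μ) μ le_rfl)
  | add p q hp hq => exact add_mem hp hq

lemma ker_le_gen (hm : 0 < m) : RingHom.ker (φ K m n) ≤ Igen K m n := by
  intro G hker
  rcases Submodule.mem_sup.1 (spanning K m n G) with ⟨y, hy, z, hz, hyz⟩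
  have hz' : z ∈ Igen K m n := hz
  have hφz : φ K m n z = 0 := gen_le_ker K m n hz'
  have hφy : φ K m n y = 0 := by
    have h2 : φ K m n y + φ K m n z = φ K m n G := by
      rw [← RingHom.map_add]; exact congrArg _ hyz
    rw [hφz, add_zero] at h2
    rw [h2]; exact hker
  have : y = 0 := normal_zero K m n hm y hy hφy
  rw [← hyz, this, zero_add]
  exact hz'

end Stmt16

open Stmt16 in
theorem stmt16 (K : Type) [Field K] (m n : ℕ) (hm : 0 < m) (hn : 0 < n)
    (I : Ideal (MvPolynomial (Fin 5) K))
    (hI : I = Ideal.span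
      { (X 0 ^ 2) * (X 0 ^ 2 + X 4 ^ m) - X 1 * X 2,
        (X 0 ^ 2 + X 4 ^ m) * (X 1 ^ n - X 3) - X 2 * X 3,
        X 1 * (X 1 ^ n - X 3) - (X 0 ^ 2) * X 3 }) :
    I.IsPrime := by
  have hIgen : I = Igen K m n := by rw [hI]; rfl
  have : I = RingHom.ker (φ K m n) := by
    rw [hIgen]
    exact le_antisymm (gen_le_ker K m n) (ker_le_gen K m n hm)
  rw [this]
  exact RingHom.ker_isPrime _
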